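/- Let X = Gr(V)/⟨r₁,…,r_m⟩ be a monomial quotient of the exterior algebra on generators V = {x, x₂, …, x_N}, with differential D(ξ) = (x + x₂ + ⋯ + x_N)ξ. Let Y_x be the span of monomials m that are nonzero in X, do not contain x, and satisfy x·m = 0 in X. Then Y_x is a subcomplex of (X, D) and the inclusion Y_x ↪ X is a quasi-isomorphism: H(X) ≅ H(Y_x). -/

import Mathlib

noncomputable section
open Module LinearMap

/-- The generator `xᵢ` of the exterior (Grassmann) algebra on the generating set `V`. -/
def gGen (K : Type*) [Field K] (V : Type*) [DecidableEq V] (i : V) :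
    ExteriorAlgebra K (V → K) :=
  ExteriorAlgebra.ι K (Pi.single i 1)

/-- The relation identifying with `0` the quadratic monomials `xᵢxⱼ` for edges `{i,j}`
of the graph `G`. -/
def graphRel (K : Type*) [Field K] (V : Type*) [DecidableEq V] (G : SimpleGraph V) :
    ExteriorAlgebra K (V → K) → ExteriorAlgebra K (V → K) → Prop :=
  fun u v => ∃ i j : V, G.Adj i j ∧ u = gGen K V i * gGen K V j ∧ v = 0

/-- The monomial quotient `A_G = Gr(V)/⟨xᵢxⱼ : {i,j} ∈ E(G)⟩` of the Grassmann algebra. -/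
abbrev GraphAlg (K : Type*) [Field K] (V : Type*) [DecidableEq V] (G : SimpleGraph V) :
    Type _ :=
  RingQuot (graphRel K V G)

/-- The differential `D(ξ) = (Σ_{x∈V} x)·ξ` on `A_G`. -/
def graphD (K : Type*) [Field K] (V : Type*) [Fintype V] [DecidableEq V]
    (G : SimpleGraph V) : GraphAlg K V G →ₗ[K] GraphAlg K V G :=
  LinearMap.mulLeft K (∑ i : V, RingQuot.mkAlgHom K (graphRel K V G) (gGen K V i))

/-- The dimension of the homology `H(A_G) = ker D / im D` (as `im D ⊆ ker D`). -/
def graphHdim (K : Type*) [Field K] (V : Type*) [Fintype V] [DecidableEq V]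
    (G : SimpleGraph V) : ℕ :=
  finrank K ↥(ker (graphD K V G)) - finrank K ↥(range (graphD K V G))

end

noncomputable section
open Module LinearMap

/-- The square-free monomial `x_{i₁}⋯x_{i_k}` (indices increasing) of `A_G` attached to a
set `S` of generators. -/
def gMon (K : Type*) [Field K] (N : ℕ) (G : SimpleGraph (Fin N)) (S : Finset (Fin N)) :
    GraphAlg K (Fin N) G :=
  ((S.sort (· ≤ ·)).map fun i => RingQuot.mkAlgHom K (graphRel K (Fin N) G) (gGen K (Fin N) i)).prod

/-- The subspace `Y_x`: the span of the monomials which are nonzero in `X`, do not contain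
`x`, and are annihilated by left multiplication by `x`. -/
def Yx (K : Type*) [Field K] (N : ℕ) (G : SimpleGraph (Fin N)) (x : Fin N) :
    Submodule K (GraphAlg K (Fin N) G) :=
  Submodule.span K {u | ∃ S : Finset (Fin N), x ∉ S ∧ gMon K N G S ≠ 0 ∧
    RingQuot.mkAlgHom K (graphRel K (Fin N) G) (gGen K (Fin N) x) * gMon K N G S = 0 ∧
    u = gMon K N G S}

end

noncomputable section Stmt10Aux
namespace Stmt10
open Module LinearMap Finsupp
open scoped Classical

variable (K : Type*) [Field K] {N : ℕ} (G : SimpleGraph (Fin N))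

/-- The generator of the graph algebra. -/
def gen (i : Fin N) : GraphAlg K (Fin N) G :=
  RingQuot.mkAlgHom K (graphRel K (Fin N) G) (gGen K (Fin N) i)

lemma gen_anticomm (i j : Fin N) :
    gen K G i * gen K G j = -(gen K G j * gen K G i) := by
  have h := ExteriorAlgebra.ι_add_mul_swap (R := K) (Pi.single i 1 : Fin N → K) (Pi.single j 1)
  have h2 := congrArg (RingQuot.mkAlgHom K (graphRel K (Fin N) G)) h
  simp only [map_add, map_mul, map_zero] at h2
  exact eq_neg_of_add_eq_zero_left h2

lemma gen_sq (i : Fin N) : gen K G i * gen K G i = 0 := by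
  have h := ExteriorAlgebra.ι_sq_zero (R := K) (Pi.single i 1 : Fin N → K)
  have h2 := congrArg (RingQuot.mkAlgHom K (graphRel K (Fin N) G)) h
  simp only [map_mul, map_zero] at h2
  exact h2

lemma gen_edge {i j : Fin N} (h : G.Adj i j) : gen K G i * gen K G j = 0 := by
  have h2 := RingQuot.mkAlgHom_rel K (s := graphRel K (Fin N) G)
    (x := gGen K (Fin N) i * gGen K (Fin N) j) (y := 0) ⟨i, j, h, rfl, rfl⟩
  simp only [map_mul, map_zero] at h2
  exact h2

/-- Product of generators over a list. -/
def genProd (l : List (Fin N)) : GraphAlg K (Fin N) G := (l.map (gen K G)).prod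

lemma gMon_eq (S : Finset (Fin N)) : gMon K N G S = genProd K G (S.sort (· ≤ ·)) := rfl

@[simp] lemma genProd_nil : genProd K G [] = 1 := rfl

lemma genProd_cons (a : Fin N) (l : List (Fin N)) :
    genProd K G (a :: l) = gen K G a * genProd K G l := by
  simp [genProd]

lemma gMon_empty : gMon K N G ∅ = 1 := by
  rw [gMon_eq, Finset.sort_empty]; rfl

/-- The sign `(-1)^{#{j ∈ S : j < i}}`. -/
def sg (i : Fin N) (S : Finset (Fin N)) : K :=
  (-1) ^ ((S.sort (· ≤ ·)).countP fun j => decide (j < i))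

lemma sg_mul_self (i : Fin N) (S : Finset (Fin N)) : sg K i S * sg K i S = 1 := by
  rw [sg, ← pow_add, ← two_mul, pow_mul]
  simp

lemma sg_ne_zero (i : Fin N) (S : Finset (Fin N)) : sg K i S ≠ 0 := by
  intro h
  have := sg_mul_self K i S
  rw [h, zero_mul] at this
  exact zero_ne_one this

lemma sort_insert_eq {i : Fin N} {S : Finset (Fin N)} (hi : i ∉ S) :
    (insert i S).sort (· ≤ ·) = (S.sort (· ≤ ·)).orderedInsert (· ≤ ·) i := by
  apply List.Perm.eq_of_pairwise' (Finset.pairwise_sort _ _)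
    ((Finset.pairwise_sort _ _).orderedInsert _ _) ?_
  have h1 : List.Perm ((insert i S).sort (· ≤ ·)) (i :: S.sort (· ≤ ·)) := by
    rw [← Multiset.coe_eq_coe]
    rw [Finset.sort_eq, Finset.insert_val, Multiset.ndinsert_of_notMem hi,
      ← Finset.sort_eq S (· ≤ ·), Multiset.cons_coe]
  exact h1.trans (List.perm_orderedInsert _ _ _).symm

lemma gen_mul_genProd (i : Fin N) :
    ∀ l : List (Fin N), l.Pairwise (· < ·) → i ∉ l →
      gen K G i * genProd K G l =
        ((-1 : K) ^ (l.countP fun j => decide (j < i))) •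
          genProd K G (l.orderedInsert (· ≤ ·) i)
  | [], _, _ => by simp [List.orderedInsert, genProd]
  | a :: t, hs, hi => by
    have hat : a ∉ t := fun h => (List.rel_of_pairwise_cons hs h).false
    have hia : i ≠ a := fun h => hi (h ▸ List.mem_cons_self)
    rw [List.orderedInsert]
    by_cases hle : i ≤ a
    · have hlt : i < a := lt_of_le_of_ne hle hia
      have hcnt : ((a :: t).countP fun j => decide (j < i)) = 0 := by
        rw [List.countP_eq_zero]
        intro j hj
        have : a ≤ j := by
          rcases List.mem_cons.1 hj with rfl | hj'
          · exact le_refl j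
          · exact le_of_lt (List.rel_of_pairwise_cons hs hj')
        simp only [decide_eq_true_eq]
        exact not_lt.2 (le_trans (le_of_lt hlt) this)
      rw [if_pos hle, hcnt, pow_zero, one_smul]
      simp [genProd_cons]
    · have hai : a < i := lt_of_not_ge hle
      have ih := gen_mul_genProd i t (List.pairwise_cons.1 hs).2
        (fun h => hi (List.mem_cons_of_mem a h))
      rw [if_neg hle, genProd_cons, genProd_cons]
      calc gen K G i * (gen K G a * genProd K G t)
          = (gen K G i * gen K G a) * genProd K G t := by rw [mul_assoc]
        _ = -((gen K G a * gen K G i) * genProd K G t) := by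
            rw [gen_anticomm]; rw [neg_mul]
        _ = -(gen K G a * (gen K G i * genProd K G t)) := by rw [mul_assoc]
        _ = -(gen K G a * (((-1 : K) ^ (t.countP fun j => decide (j < i))) •
              genProd K G (t.orderedInsert (· ≤ ·) i))) := by rw [ih]
        _ = ((-1 : K) ^ ((a :: t).countP fun j => decide (j < i))) •
              (gen K G a * genProd K G (t.orderedInsert (· ≤ ·) i)) := by
            rw [List.countP_cons]
            simp only [decide_eq_true_eq, if_pos hai, pow_add, pow_one]
            rw [mul_smul_comm, ← neg_smul]
            congr 1
            ring

lemma countP_sort_eq (i : Fin N) (S : Finset (Fin N)) :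
    ((S.sort (· ≤ ·)).countP fun j => decide (j < i)) =
      ((S.sort (· ≤ ·)).countP fun j => decide (j < i)) := rfl

lemma gen_mul_gMon {i : Fin N} {S : Finset (Fin N)} (hi : i ∉ S) :
    gen K G i * gMon K N G S = sg K i S • gMon K N G (insert i S) := by
  rw [gMon_eq, gMon_eq, sort_insert_eq hi, sg]
  exact gen_mul_genProd K G i _ (Finset.sortedLT_sort S).pairwise
    (fun h => hi ((Finset.mem_sort _).1 h))

lemma gMon_insert {i : Fin N} {S : Finset (Fin N)} (hi : i ∉ S) :
    gMon K N G (insert i S) = sg K i S • (gen K G i * gMon K N G S) := by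
  rw [gen_mul_gMon K G hi, smul_smul, sg_mul_self, one_smul]

lemma gen_mul_gMon_of_mem {i : Fin N} {S : Finset (Fin N)} (hi : i ∈ S) :
    gen K G i * gMon K N G S = 0 := by
  have h1 : i ∉ S.erase i := Finset.notMem_erase i S
  have h2 : gMon K N G S = sg K i (S.erase i) • (gen K G i * gMon K N G (S.erase i)) := by
    rw [← gMon_insert K G h1, Finset.insert_erase hi]
  rw [h2, mul_smul_comm, ← mul_assoc, gen_sq, zero_mul, smul_zero]

/-- The dependency predicate: `S` contains an edge of `G`. -/
def Dep (S : Finset (Fin N)) : Prop := ∃ i ∈ S, ∃ j ∈ S, G.Adj i j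

lemma Dep.mono {S T : Finset (Fin N)} (hST : S ⊆ T) (h : Dep G S) : Dep G T := by
  obtain ⟨i, hi, j, hj, hadj⟩ := h
  exact ⟨i, hST hi, j, hST hj, hadj⟩

lemma gMon_eq_zero_of_dep {S : Finset (Fin N)} (h : Dep G S) : gMon K N G S = 0 := by
  obtain ⟨i, hi, j, hj, hadj⟩ := h
  have hij : i ≠ j := hadj.ne
  have hj' : j ∈ S.erase i := Finset.mem_erase.2 ⟨fun h => hij h.symm, hj⟩
  have h1 : gMon K N G S = sg K i (S.erase i) • (gen K G i * gMon K N G (S.erase i)) := by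
    rw [← gMon_insert K G (Finset.notMem_erase i S), Finset.insert_erase hi]
  have h2 : gMon K N G (S.erase i) =
      sg K j ((S.erase i).erase j) • (gen K G j * gMon K N G ((S.erase i).erase j)) := by
    rw [← gMon_insert K G (Finset.notMem_erase j (S.erase i)), Finset.insert_erase hj']
  rw [h1, h2, mul_smul_comm, ← mul_assoc, gen_edge K G hadj, zero_mul, smul_zero, smul_zero]

/-- The span of all monomials. -/
def MonSpan : Submodule K (GraphAlg K (Fin N) G) :=
  Submodule.span K {u | ∃ S : Finset (Fin N), u = gMon K N G S}

lemma gMon_mem_monSpan (S : Finset (Fin N)) : gMon K N G S ∈ MonSpan K G :=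
  Submodule.subset_span ⟨S, rfl⟩

lemma gen_mul_mem_monSpan (a : Fin N) {u : GraphAlg K (Fin N) G} (hu : u ∈ MonSpan K G) :
    gen K G a * u ∈ MonSpan K G := by
  induction hu using Submodule.span_induction with
  | mem u hu =>
    obtain ⟨S, rfl⟩ := hu
    by_cases ha : a ∈ S
    · rw [gen_mul_gMon_of_mem K G ha]; exact Submodule.zero_mem _
    · rw [gen_mul_gMon K G ha]
      exact Submodule.smul_mem _ _ (gMon_mem_monSpan K G _)
  | zero => rw [mul_zero]; exact Submodule.zero_mem _
  | add u v _ _ h1 h2 => rw [mul_add]; exact Submodule.add_mem _ h1 h2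
  | smul c u _ h => rw [mul_smul_comm]; exact Submodule.smul_mem _ _ h

lemma genProd_mul_mem_monSpan (l : List (Fin N)) {u : GraphAlg K (Fin N) G}
    (hu : u ∈ MonSpan K G) : genProd K G l * u ∈ MonSpan K G := by
  induction l with
  | nil => simpa [genProd] using hu
  | cons a t ih =>
    rw [genProd_cons, mul_assoc]
    exact gen_mul_mem_monSpan K G a ih

lemma mul_mem_monSpan {u v : GraphAlg K (Fin N) G} (hu : u ∈ MonSpan K G)
    (hv : v ∈ MonSpan K G) : u * v ∈ MonSpan K G := by
  induction hu using Submodule.span_induction with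
  | mem u hu =>
    obtain ⟨S, rfl⟩ := hu
    rw [gMon_eq]
    exact genProd_mul_mem_monSpan K G _ hv
  | zero => rw [zero_mul]; exact Submodule.zero_mem _
  | add u w _ _ h1 h2 => rw [add_mul]; exact Submodule.add_mem _ h1 h2
  | smul c u _ h => rw [smul_mul_assoc]; exact Submodule.smul_mem _ _ h

lemma gen_eq_gMon_single (i : Fin N) : gen K G i = gMon K N G {i} := by
  have h : ({i} : Finset (Fin N)) = insert i ∅ := rfl
  rw [h, gMon_insert K G (Finset.notMem_empty i), gMon_empty, mul_one, sg,
    Finset.sort_empty]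
  simp

lemma mem_monSpan (ξ : GraphAlg K (Fin N) G) : ξ ∈ MonSpan K G := by
  obtain ⟨a, rfl⟩ := RingQuot.mkAlgHom_surjective K (graphRel K (Fin N) G) ξ
  induction a using ExteriorAlgebra.induction with
  | algebraMap r =>
    rw [AlgHom.commutes, Algebra.algebraMap_eq_smul_one]
    have h1 : (1 : GraphAlg K (Fin N) G) = gMon K N G ∅ := (gMon_empty K G).symm
    rw [h1]
    exact Submodule.smul_mem _ _ (gMon_mem_monSpan K G _)
  | ι v =>
    have hv : (ExteriorAlgebra.ι K v : ExteriorAlgebra K (Fin N → K)) =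
        ∑ i, v i • gGen K (Fin N) i := by
      have : v = ∑ i, v i • (Pi.single i 1 : Fin N → K) := by
        funext j
        rw [Finset.sum_apply]
        rw [Finset.sum_eq_single j]
        · simp
        · intro b _ hbj
          simp [Pi.single_apply, hbj]
        · simp
      calc ExteriorAlgebra.ι K v
          = ExteriorAlgebra.ι K (∑ i, v i • (Pi.single i 1 : Fin N → K)) := by rw [← this]
        _ = ∑ i, v i • gGen K (Fin N) i := by
            rw [map_sum]
            simp only [map_smul, gGen]
      
    rw [hv, map_sum]
    apply Submodule.sum_mem
    intro i _
    rw [map_smul]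
    apply Submodule.smul_mem
    have : RingQuot.mkAlgHom K (graphRel K (Fin N) G) (gGen K (Fin N) i) = gen K G i := rfl
    rw [this, gen_eq_gMon_single]
    exact gMon_mem_monSpan K G _
  | mul a b ha hb =>
    rw [map_mul]
    exact mul_mem_monSpan K G ha hb
  | add a b ha hb =>
    rw [map_add]
    exact Submodule.add_mem _ ha hb

lemma sg_insert (i : Fin N) {j : Fin N} {S : Finset (Fin N)} (hj : j ∉ S) :
    sg K i (insert j S) = sg K i S * (if j < i then -1 else 1) := by
  rw [sg, sg, sort_insert_eq hj, (List.perm_orderedInsert (· ≤ ·) j _).countP_eq,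
    List.countP_cons, pow_add]
  by_cases h : j < i
  · simp [h]
  · simp [h]

lemma sg_swap {i j : Fin N} {S : Finset (Fin N)} (hij : i ≠ j) (hi : i ∉ S) (hj : j ∉ S) :
    sg K j S * sg K i (insert j S) = -(sg K i S * sg K j (insert i S)) := by
  rw [sg_insert K i hj, sg_insert K j hi]
  rcases lt_or_gt_of_ne hij with h | h
  · rw [if_neg (asymm h), if_pos h]; ring
  · rw [if_pos h, if_neg (asymm h)]; ring

/-- The model operator `Tᵢ` on the free module over all finsets. -/
def Tmap (i : Fin N) : (Finset (Fin N) →₀ K) →ₗ[K] (Finset (Fin N) →₀ K) :=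
  Finsupp.lift _ K _ fun S =>
    if i ∈ S ∨ Dep G (insert i S) then 0 else sg K i S • Finsupp.single (insert i S) 1

lemma Tmap_single (i : Fin N) (S : Finset (Fin N)) :
    Tmap K G i (Finsupp.single S 1) =
      if i ∈ S ∨ Dep G (insert i S) then 0 else sg K i S • Finsupp.single (insert i S) 1 := by
  rw [Tmap, Finsupp.lift_apply, Finsupp.sum_single_index] <;> simp

lemma Tmap_Tmap_single (i j : Fin N) (S : Finset (Fin N)) :
    Tmap K G i (Tmap K G j (Finsupp.single S 1)) =
      if i = j ∨ i ∈ S ∨ j ∈ S ∨ Dep G (insert i (insert j S)) then 0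
      else (sg K j S * sg K i (insert j S)) • Finsupp.single (insert i (insert j S)) 1 := by
  rw [Tmap_single]
  by_cases hj : j ∈ S ∨ Dep G (insert j S)
  · rw [if_pos hj, map_zero, if_pos]
    rcases hj with hj | hj
    · exact Or.inr (Or.inr (Or.inl hj))
    · exact Or.inr (Or.inr (Or.inr (Dep.mono G (Finset.subset_insert i (insert j S)) hj)))
  · rw [if_neg hj, map_smul, Tmap_single]
    push_neg at hj
    by_cases hC : i = j ∨ i ∈ S ∨ j ∈ S ∨ Dep G (insert i (insert j S))
    · rw [if_pos, if_pos hC, smul_zero]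
      rcases hC with hC | hC | hC | hC
      · exact Or.inl (hC ▸ Finset.mem_insert_self j S)
      · exact Or.inl (Finset.mem_insert_of_mem hC)
      · exact absurd hC hj.1
      · exact Or.inr hC
    · push_neg at hC
      have h1 : ¬(i ∈ insert j S ∨ Dep G (insert i (insert j S))) := by
        intro h
        rcases h with h | h
        · rcases Finset.mem_insert.1 h with h | h
          · exact hC.1 h
          · exact hC.2.1 h
        · exact hC.2.2.2 h
      have h2 : ¬(i = j ∨ i ∈ S ∨ j ∈ S ∨ Dep G (insert i (insert j S))) := by
        intro h
        rcases h with h | h | h | h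
        · exact hC.1 h
        · exact hC.2.1 h
        · exact hj.1 h
        · exact hC.2.2.2 h
      rw [if_neg h1, if_neg h2, smul_smul]

lemma Tmap_comp_self (i : Fin N) : Tmap K G i ∘ₗ Tmap K G i = 0 := by
  apply Finsupp.lhom_ext
  intro S b
  have hb : (Finsupp.single S b : Finset (Fin N) →₀ K) = b • Finsupp.single S 1 := by
    rw [Finsupp.smul_single, smul_eq_mul, mul_one]
  rw [LinearMap.comp_apply, LinearMap.zero_apply, hb, map_smul, map_smul, Tmap_Tmap_single,
    if_pos (Or.inl rfl), smul_zero]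

lemma Tmap_comp_anticomm (i j : Fin N) :
    Tmap K G i ∘ₗ Tmap K G j + Tmap K G j ∘ₗ Tmap K G i = 0 := by
  apply Finsupp.lhom_ext
  intro S b
  have hb : (Finsupp.single S b : Finset (Fin N) →₀ K) = b • Finsupp.single S 1 := by
    rw [Finsupp.smul_single, smul_eq_mul, mul_one]
  rw [hb]
  simp only [LinearMap.add_apply, LinearMap.comp_apply, map_smul, LinearMap.zero_apply]
  rw [Tmap_Tmap_single, Tmap_Tmap_single]
  by_cases hC : i = j ∨ i ∈ S ∨ j ∈ S ∨ Dep G (insert i (insert j S))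
  · have hC' : j = i ∨ j ∈ S ∨ i ∈ S ∨ Dep G (insert j (insert i S)) := by
      rw [Finset.insert_comm]
      tauto
    rw [if_pos hC, if_pos hC']
    simp
  · push_neg at hC
    have hC' : ¬(j = i ∨ j ∈ S ∨ i ∈ S ∨ Dep G (insert j (insert i S))) := by
      rw [Finset.insert_comm]
      push_neg
      exact ⟨fun h => hC.1 h.symm, hC.2.2.1, hC.2.1, hC.2.2.2⟩
    rw [if_neg (by push_neg; exact hC), if_neg hC']
    rw [Finset.insert_comm]
    rw [sg_swap K hC.1 hC.2.1 hC.2.2.1, neg_smul]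
    simp

/-- The linear family `v ↦ ∑ vᵢ Tᵢ`. -/
def Tv : (Fin N → K) →ₗ[K] Module.End K (Finset (Fin N) →₀ K) where
  toFun v := ∑ i, v i • Tmap K G i
  map_add' u v := by
    simp [add_smul, Finset.sum_add_distrib]
  map_smul' c v := by
    simp [smul_smul, Finset.smul_sum]

lemma Tv_sq (v : Fin N → K) : Tv K G v * Tv K G v = 0 := by
  show (∑ i, v i • Tmap K G i) * (∑ j, v j • Tmap K G j) = 0
  rw [Finset.sum_mul_sum]
  rw [← Finset.sum_product']
  apply Finset.sum_ninvolution (fun p => (p.2, p.1))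
  · intro ⟨i, j⟩
    show (v i • Tmap K G i) * (v j • Tmap K G j) + (v j • Tmap K G j) * (v i • Tmap K G i) = 0
    rw [smul_mul_smul_comm, smul_mul_smul_comm, mul_comm (v j) (v i), ← smul_add,
      Module.End.mul_eq_comp, Module.End.mul_eq_comp, Tmap_comp_anticomm, smul_zero]
  · intro ⟨i, j⟩ hne
    show (j, i) ≠ (i, j)
    intro h
    have hij : i = j := by
      have h2 := congrArg Prod.fst h
      simp only [Prod.fst] at h2
      exact h2.symm
    apply hne
    show (v i • Tmap K G i) * (v j • Tmap K G j) = 0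
    rw [hij, smul_mul_smul_comm, Module.End.mul_eq_comp, Tmap_comp_self, smul_zero]
  · intro _; exact Finset.mem_univ _
  · intro _; rfl

/-- The algebra morphism from the exterior algebra to endomorphisms of the model. -/
def Phi0 : ExteriorAlgebra K (Fin N → K) →ₐ[K] Module.End K (Finset (Fin N) →₀ K) :=
  ExteriorAlgebra.lift K ⟨Tv K G, Tv_sq K G⟩

lemma Phi0_gGen (i : Fin N) : Phi0 K G (gGen K (Fin N) i) = Tmap K G i := by
  rw [Phi0, gGen, ExteriorAlgebra.lift_ι_apply]
  show ∑ j, (Pi.single i 1 : Fin N → K) j • Tmap K G j = Tmap K G i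
  rw [Finset.sum_eq_single i]
  · simp
  · intro b _ hbi
    rw [Pi.single_eq_of_ne hbi, zero_smul]
  · simp

lemma Phi0_rel : ∀ ⦃u v : ExteriorAlgebra K (Fin N → K)⦄,
    graphRel K (Fin N) G u v → Phi0 K G u = Phi0 K G v := by
  rintro u v ⟨i, j, hadj, rfl, rfl⟩
  rw [map_mul, map_zero, Phi0_gGen, Phi0_gGen]
  have : Tmap K G i ∘ₗ Tmap K G j = 0 := by
    apply Finsupp.lhom_ext
    intro S b
    have hb : (Finsupp.single S b : Finset (Fin N) →₀ K) = b • Finsupp.single S 1 := by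
      rw [Finsupp.smul_single, smul_eq_mul, mul_one]
    rw [LinearMap.comp_apply, LinearMap.zero_apply, hb, map_smul, map_smul, Tmap_Tmap_single,
      if_pos, smul_zero]
    exact Or.inr (Or.inr (Or.inr ⟨i, Finset.mem_insert_self i _, j,
      Finset.mem_insert_of_mem (Finset.mem_insert_self j S), hadj⟩))
  rw [← Module.End.mul_eq_comp] at this
  rw [this]

/-- The representation of the graph algebra on the model. -/
def Phi : GraphAlg K (Fin N) G →ₐ[K] Module.End K (Finset (Fin N) →₀ K) :=
  RingQuot.liftAlgHom K ⟨Phi0 K G, Phi0_rel K G⟩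

lemma Phi_gen (i : Fin N) : Phi K G (gen K G i) = Tmap K G i := by
  rw [Phi, gen, RingQuot.liftAlgHom_mkAlgHom_apply, Phi0_gGen]

/-- Evaluation of the representation at the vacuum vector. -/
def ev : GraphAlg K (Fin N) G →ₗ[K] (Finset (Fin N) →₀ K) :=
  (LinearMap.applyₗ (Finsupp.single ∅ 1 : Finset (Fin N) →₀ K)).comp (Phi K G).toLinearMap

lemma ev_apply (ξ : GraphAlg K (Fin N) G) : ev K G ξ = Phi K G ξ (Finsupp.single ∅ 1) := rfl

lemma ev_genProd : ∀ l : List (Fin N), l.Pairwise (· < ·) →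
    ev K G (genProd K G l) = if Dep G l.toFinset then 0 else Finsupp.single l.toFinset 1
  | [], _ => by
    rw [ev_apply, genProd_nil, map_one]
    have hd : ¬ Dep G ((∅ : Finset (Fin N))) := by
      rintro ⟨i, hi, -⟩
      exact absurd hi (Finset.notMem_empty i)
    rw [List.toFinset_nil, if_neg hd]
    rfl
  | a :: t, hs => by
    have hsort := List.pairwise_cons.1 hs
    have ih := ev_genProd t hsort.2
    rw [ev_apply] at ih ⊢
    rw [genProd_cons, map_mul, Module.End.mul_apply, ih]
    by_cases hdep : Dep G t.toFinset
    · rw [if_pos hdep, map_zero, List.toFinset_cons,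
        if_pos (Dep.mono G (Finset.subset_insert _ _) hdep)]
    · rw [if_neg hdep, Phi_gen, Tmap_single, List.toFinset_cons]
      have ha_not : a ∉ t.toFinset := by
        rw [List.mem_toFinset]
        intro h
        exact (hsort.1 a h).false
      by_cases hdep2 : Dep G (insert a t.toFinset)
      · rw [if_pos (Or.inr hdep2), if_pos hdep2]
      · rw [if_neg ?_, if_neg hdep2]
        · have hsg : sg K a t.toFinset = 1 := by
            rw [sg]
            have hz : ((t.toFinset.sort (· ≤ ·)).countP fun j => decide (j < a)) = 0 := by
              rw [List.countP_eq_zero]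
              intro j hj
              have hj2 : j ∈ t := List.mem_toFinset.1 ((Finset.mem_sort _).1 hj)
              simp only [decide_eq_true_eq]
              exact not_lt.2 (le_of_lt (hsort.1 j hj2))
            rw [hz, pow_zero]
          rw [hsg, one_smul]
        · rintro (h | h)
          exacts [ha_not h, hdep2 h]

lemma ev_gMon (S : Finset (Fin N)) :
    ev K G (gMon K N G S) = if Dep G S then 0 else Finsupp.single S 1 := by
  have h := ev_genProd K G (S.sort (· ≤ ·)) (Finset.sortedLT_sort S).pairwise
  rw [Finset.sort_toFinset] at h
  rw [gMon_eq]
  exact h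

lemma gMon_ne_zero_of_not_dep {S : Finset (Fin N)} (h : ¬ Dep G S) : gMon K N G S ≠ 0 := by
  intro h0
  have := ev_gMon K G S
  rw [h0, map_zero, if_neg h] at this
  exact one_ne_zero (Finsupp.single_eq_zero.1 this.symm)

/-- The section of `ev` sending basis elements to monomials. -/
def psi : (Finset (Fin N) →₀ K) →ₗ[K] GraphAlg K (Fin N) G :=
  Finsupp.lift _ K _ fun S => gMon K N G S

lemma psi_single (S : Finset (Fin N)) (b : K) :
    psi K G (Finsupp.single S b) = b • gMon K N G S := by
  rw [psi, Finsupp.lift_apply, Finsupp.sum_single_index]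
  simp

lemma psi_ev (ξ : GraphAlg K (Fin N) G) : psi K G (ev K G ξ) = ξ := by
  induction mem_monSpan K G ξ using Submodule.span_induction with
  | mem u hu =>
    obtain ⟨S, rfl⟩ := hu
    rw [ev_gMon]
    by_cases hdep : Dep G S
    · rw [if_pos hdep, map_zero, gMon_eq_zero_of_dep K G hdep]
    · rw [if_neg hdep, psi_single, one_smul]
  | zero => rw [map_zero, map_zero]
  | add u v _ _ h1 h2 => rw [map_add, map_add, h1, h2]
  | smul c u _ h => rw [map_smul, map_smul, h]

lemma eq_zero_of_ev {ξ : GraphAlg K (Fin N) G} (h : ev K G ξ = 0) : ξ = 0 := by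
  rw [← psi_ev K G ξ, h, map_zero]

variable (x : Fin N)

/-- The span of monomials not containing `x`. -/
def X0 : Submodule K (GraphAlg K (Fin N) G) :=
  Submodule.span K {u | ∃ S : Finset (Fin N), x ∉ S ∧ u = gMon K N G S}

/-- The span of monomials containing `x`. -/
def X1 : Submodule K (GraphAlg K (Fin N) G) :=
  Submodule.span K {u | ∃ S : Finset (Fin N), x ∈ S ∧ u = gMon K N G S}

lemma ev_X0 {ξ : GraphAlg K (Fin N) G} (hξ : ξ ∈ X0 K G x) :
    ev K G ξ ∈ Finsupp.supported K K {S : Finset (Fin N) | x ∉ S} := by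
  induction hξ using Submodule.span_induction with
  | mem u hu =>
    obtain ⟨S, hxS, rfl⟩ := hu
    rw [ev_gMon]
    by_cases hdep : Dep G S
    · rw [if_pos hdep]; exact Submodule.zero_mem _
    · rw [if_neg hdep]; exact Finsupp.single_mem_supported K 1 hxS
  | zero => rw [map_zero]; exact Submodule.zero_mem _
  | add u v _ _ h1 h2 => rw [map_add]; exact Submodule.add_mem _ h1 h2
  | smul c u _ h => rw [map_smul]; exact Submodule.smul_mem _ _ h

lemma ev_X1 {ξ : GraphAlg K (Fin N) G} (hξ : ξ ∈ X1 K G x) :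
    ev K G ξ ∈ Finsupp.supported K K {S : Finset (Fin N) | x ∈ S} := by
  induction hξ using Submodule.span_induction with
  | mem u hu =>
    obtain ⟨S, hxS, rfl⟩ := hu
    rw [ev_gMon]
    by_cases hdep : Dep G S
    · rw [if_pos hdep]; exact Submodule.zero_mem _
    · rw [if_neg hdep]; exact Finsupp.single_mem_supported K 1 hxS
  | zero => rw [map_zero]; exact Submodule.zero_mem _
  | add u v _ _ h1 h2 => rw [map_add]; exact Submodule.add_mem _ h1 h2
  | smul c u _ h => rw [map_smul]; exact Submodule.smul_mem _ _ h

lemma eq_zero_of_mem_X1_of_ev_supported {v : GraphAlg K (Fin N) G} (hv1 : v ∈ X1 K G x)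
    (hv0 : ev K G v ∈ Finsupp.supported K K {S : Finset (Fin N) | x ∉ S}) : v = 0 := by
  have h1 := ev_X1 K G x hv1
  have hsupp : (ev K G v).support = ∅ := by
    rw [Finset.eq_empty_iff_forall_notMem]
    intro S hS
    exact ((Finsupp.mem_supported _ _).1 hv0 hS) ((Finsupp.mem_supported _ _).1 h1 hS)
  exact eq_zero_of_ev K G (Finsupp.support_eq_empty.1 hsupp)

/-- Contraction with `x` on the model. -/
def deltaF : (Finset (Fin N) →₀ K) →ₗ[K] GraphAlg K (Fin N) G :=
  Finsupp.lift _ K _ fun S =>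
    if x ∈ S then sg K x (S.erase x) • gMon K N G (S.erase x) else 0

lemma deltaF_single (S : Finset (Fin N)) :
    deltaF K G x (Finsupp.single S 1) =
      if x ∈ S then sg K x (S.erase x) • gMon K N G (S.erase x) else 0 := by
  rw [deltaF, Finsupp.lift_apply, Finsupp.sum_single_index] <;> simp

/-- Contraction with `x` on the graph algebra. -/
def delta : GraphAlg K (Fin N) G →ₗ[K] GraphAlg K (Fin N) G :=
  (deltaF K G x).comp (ev K G)

lemma Yx_le_X0 : Yx K N G x ≤ X0 K G x := by
  apply Submodule.span_mono
  rintro u ⟨S, h1, _, _, rfl⟩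
  exact ⟨S, h1, rfl⟩

lemma gen_def (i : Fin N) :
    RingQuot.mkAlgHom K (graphRel K (Fin N) G) (gGen K (Fin N) i) = gen K G i := rfl

lemma sub_delta_mem_Yx {f : GraphAlg K (Fin N) G} (hf : f ∈ X0 K G x) :
    f - delta K G x (gen K G x * f) ∈ Yx K N G x := by
  induction hf using Submodule.span_induction with
  | mem u hu =>
    obtain ⟨S, hxS, rfl⟩ := hu
    rw [gen_mul_gMon K G hxS, map_smul, delta, LinearMap.comp_apply, ev_gMon]
    by_cases hdep : Dep G (insert x S)
    · rw [if_pos hdep, map_zero, smul_zero, sub_zero]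
      by_cases h0 : gMon K N G S = 0
      · rw [h0]; exact Submodule.zero_mem _
      · apply Submodule.subset_span
        refine ⟨S, hxS, h0, ?_, rfl⟩
        rw [gen_def, gen_mul_gMon K G hxS, gMon_eq_zero_of_dep K G hdep, smul_zero]
    · rw [if_neg hdep, deltaF_single, if_pos (Finset.mem_insert_self x S),
        Finset.erase_insert hxS, smul_smul, sg_mul_self, one_smul, sub_self]
      exact Submodule.zero_mem _
  | zero =>
    rw [mul_zero, map_zero, sub_zero]
    exact Submodule.zero_mem _
  | add u v _ _ h1 h2 =>
    have : u + v - delta K G x (gen K G x * (u + v)) =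
        (u - delta K G x (gen K G x * u)) + (v - delta K G x (gen K G x * v)) := by
      rw [mul_add, map_add]
      abel
    rw [this]
    exact Submodule.add_mem _ h1 h2
  | smul c u _ h =>
    have : c • u - delta K G x (gen K G x * (c • u)) =
        c • (u - delta K G x (gen K G x * u)) := by
      rw [mul_smul_comm, map_smul, smul_sub]
    rw [this]
    exact Submodule.smul_mem _ _ h

lemma mem_Yx_of_X0_ker {f : GraphAlg K (Fin N) G} (hf : f ∈ X0 K G x)
    (hxf : gen K G x * f = 0) : f ∈ Yx K N G x := by
  have h := sub_delta_mem_Yx K G x hf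
  rwa [hxf, map_zero, sub_zero] at h

lemma gen_x_mul_mem_X1 {f : GraphAlg K (Fin N) G} (hf : f ∈ X0 K G x) :
    gen K G x * f ∈ X1 K G x := by
  induction hf using Submodule.span_induction with
  | mem u hu =>
    obtain ⟨S, hxS, rfl⟩ := hu
    rw [gen_mul_gMon K G hxS]
    exact Submodule.smul_mem _ _
      (Submodule.subset_span ⟨insert x S, Finset.mem_insert_self x S, rfl⟩)
  | zero => rw [mul_zero]; exact Submodule.zero_mem _
  | add u v _ _ h1 h2 => rw [mul_add]; exact Submodule.add_mem _ h1 h2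
  | smul c u _ h => rw [mul_smul_comm]; exact Submodule.smul_mem _ _ h

/-- The part of the differential avoiding `x`. -/
def Eop : GraphAlg K (Fin N) G →ₗ[K] GraphAlg K (Fin N) G :=
  LinearMap.mulLeft K (∑ i ∈ Finset.univ.erase x, gen K G i)

lemma graphD_apply (ξ : GraphAlg K (Fin N) G) :
    graphD K (Fin N) G ξ = (∑ i, gen K G i) * ξ := rfl

lemma graphD_eq (ξ : GraphAlg K (Fin N) G) :
    graphD K (Fin N) G ξ = gen K G x * ξ + Eop K G x ξ := by
  rw [graphD_apply, Eop, LinearMap.mulLeft_apply, ← add_mul,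
    Finset.add_sum_erase _ _ (Finset.mem_univ x)]

lemma wsum_sq : (∑ i, gen K G i) * (∑ i, gen K G i) = 0 := by
  have h : (∑ i, gen K G i) = RingQuot.mkAlgHom K (graphRel K (Fin N) G)
      (ExteriorAlgebra.ι K (∑ i, (Pi.single i 1 : Fin N → K))) := by
    rw [map_sum, map_sum]
    rfl
  rw [h, ← map_mul, ExteriorAlgebra.ι_sq_zero, map_zero]

lemma DD_zero (ξ : GraphAlg K (Fin N) G) :
    graphD K (Fin N) G (graphD K (Fin N) G ξ) = 0 := by
  rw [graphD_apply, graphD_apply, ← mul_assoc, wsum_sq, zero_mul]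

lemma Eop_mem_X0 {f : GraphAlg K (Fin N) G} (hf : f ∈ X0 K G x) :
    Eop K G x f ∈ X0 K G x := by
  induction hf using Submodule.span_induction with
  | mem u hu =>
    obtain ⟨S, hxS, rfl⟩ := hu
    rw [Eop, LinearMap.mulLeft_apply, Finset.sum_mul]
    apply Submodule.sum_mem
    intro i hi
    have hix : i ≠ x := (Finset.mem_erase.1 hi).1
    by_cases hiS : i ∈ S
    · rw [gen_mul_gMon_of_mem K G hiS]; exact Submodule.zero_mem _
    · rw [gen_mul_gMon K G hiS]
      apply Submodule.smul_mem
      apply Submodule.subset_span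
      exact ⟨insert i S, by
        rw [Finset.mem_insert]
        rintro (h | h)
        exacts [hix h.symm, hxS h], rfl⟩
  | zero => rw [map_zero]; exact Submodule.zero_mem _
  | add u v _ _ h1 h2 => rw [map_add]; exact Submodule.add_mem _ h1 h2
  | smul c u _ h => rw [map_smul]; exact Submodule.smul_mem _ _ h

lemma x_mul_Yx {u : GraphAlg K (Fin N) G} (hu : u ∈ Yx K N G x) : gen K G x * u = 0 := by
  induction hu using Submodule.span_induction with
  | mem u hu =>
    obtain ⟨S, _, _, h3, rfl⟩ := hu
    rw [← gen_def]
    exact h3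
  | zero => rw [mul_zero]
  | add u v _ _ h1 h2 => rw [mul_add, h1, h2, add_zero]
  | smul c u _ h => rw [mul_smul_comm, h, smul_zero]

lemma Eop_mem_Yx {u : GraphAlg K (Fin N) G} (hu : u ∈ Yx K N G x) :
    Eop K G x u ∈ Yx K N G x := by
  induction hu using Submodule.span_induction with
  | mem u hu =>
    obtain ⟨S, hxS, hne, hx0, rfl⟩ := hu
    rw [gen_def] at hx0
    rw [Eop, LinearMap.mulLeft_apply, Finset.sum_mul]
    apply Submodule.sum_mem
    intro i hi
    have hix : i ≠ x := (Finset.mem_erase.1 hi).1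
    by_cases hiS : i ∈ S
    · rw [gen_mul_gMon_of_mem K G hiS]; exact Submodule.zero_mem _
    · rw [gen_mul_gMon K G hiS]
      apply Submodule.smul_mem
      by_cases h0 : gMon K N G (insert i S) = 0
      · rw [h0]; exact Submodule.zero_mem _
      · apply Submodule.subset_span
        refine ⟨insert i S, ?_, h0, ?_, rfl⟩
        · rw [Finset.mem_insert]
          rintro (h | h)
          exacts [hix h.symm, hxS h]
        · rw [gen_def, gMon_insert K G hiS, mul_smul_comm, ← mul_assoc,
            gen_anticomm K G x i, neg_mul, mul_assoc, hx0, mul_zero, neg_zero, smul_zero]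
  | zero => rw [map_zero]; exact Submodule.zero_mem _
  | add u v _ _ h1 h2 => rw [map_add]; exact Submodule.add_mem _ h1 h2
  | smul c u _ h => rw [map_smul]; exact Submodule.smul_mem _ _ h

lemma exists_decomp (ξ : GraphAlg K (Fin N) G) :
    ∃ a c, a ∈ X0 K G x ∧ c ∈ X0 K G x ∧ ξ = a + gen K G x * c := by
  induction mem_monSpan K G ξ using Submodule.span_induction with
  | mem u hu =>
    obtain ⟨S, rfl⟩ := hu
    by_cases hxS : x ∈ S
    · refine ⟨0, sg K x (S.erase x) • gMon K N G (S.erase x), Submodule.zero_mem _,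
        Submodule.smul_mem _ _
          (Submodule.subset_span ⟨S.erase x, Finset.notMem_erase x S, rfl⟩), ?_⟩
      rw [zero_add, mul_smul_comm, ← gMon_insert K G (Finset.notMem_erase x S),
        Finset.insert_erase hxS]
    · exact ⟨gMon K N G S, 0, Submodule.subset_span ⟨S, hxS, rfl⟩, Submodule.zero_mem _,
        by rw [mul_zero, add_zero]⟩
  | zero => exact ⟨0, 0, Submodule.zero_mem _, Submodule.zero_mem _, by rw [mul_zero, add_zero]⟩
  | add u v _ _ h1 h2 =>
    obtain ⟨a, c, ha, hc, h⟩ := h1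
    obtain ⟨a', c', ha', hc', h'⟩ := h2
    refine ⟨a + a', c + c', Submodule.add_mem _ ha ha', Submodule.add_mem _ hc hc', ?_⟩
    rw [h, h', mul_add]
    abel
  | smul r u _ h =>
    obtain ⟨a, c, ha, hc, h⟩ := h
    exact ⟨r • a, r • c, Submodule.smul_mem _ _ ha, Submodule.smul_mem _ _ hc,
      by rw [h, smul_add, mul_smul_comm]⟩

lemma xpart_eq_zero {g : GraphAlg K (Fin N) G} (hg : g ∈ X0 K G x)
    (hD : graphD K (Fin N) G g ∈ X0 K G x) : gen K G x * g = 0 := by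
  apply eq_zero_of_mem_X1_of_ev_supported K G x (gen_x_mul_mem_X1 K G x hg)
  have h : gen K G x * g = graphD K (Fin N) G g - Eop K G x g := by
    rw [graphD_eq K G x g]
    abel
  rw [h, map_sub]
  exact Submodule.sub_mem _ (ev_X0 K G x hD) (ev_X0 K G x (Eop_mem_X0 K G x hg))

end Stmt10
end Stmt10Aux


open Stmt10

/-- For a monomial quotient `X = Gr(V)/⟨r₁,…,r_m⟩` of the exterior algebra on generators
`V = {x, x₂, …, x_N}` with differential `D(ξ) = (x + x₂ + ⋯ + x_N)ξ`, the span `Y_x` of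
the monomials not containing `x` and annihilated by `x` is a subcomplex, and the
inclusion `Y_x ↪ X` is a quasi-isomorphism: every cycle is a boundary plus a cycle in
`Y_x`, and a cycle of `Y_x` bounding in `X` already bounds in `Y_x`, so `H(X) ≅ H(Y_x)`. -/
theorem stmt10 (K : Type*) [Field K] (N : ℕ) (G : SimpleGraph (Fin N)) (x : Fin N) :
    Submodule.map (graphD K (Fin N) G) (Yx K N G x) ≤ Yx K N G x ∧
    (∀ ξ ∈ LinearMap.ker (graphD K (Fin N) G), ∃ f : GraphAlg K (Fin N) G,
      ξ - graphD K (Fin N) G f ∈ Yx K N G x ⊓ LinearMap.ker (graphD K (Fin N) G)) ∧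
    (∀ h ∈ Yx K N G x ⊓ LinearMap.ker (graphD K (Fin N) G),
      (∃ f : GraphAlg K (Fin N) G, graphD K (Fin N) G f = h) →
      ∃ g ∈ Yx K N G x, graphD K (Fin N) G g = h) := by
  refine ⟨?_, ?_, ?_⟩
  · rintro u' ⟨u, hu, rfl⟩
    rw [graphD_eq K G x u, x_mul_Yx K G x hu, zero_add]
    exact Eop_mem_Yx K G x hu
  · intro ξ hξ
    rw [LinearMap.mem_ker] at hξ
    obtain ⟨a, c, ha, hc, hdecomp⟩ := exists_decomp K G x ξ
    refine ⟨c, ?_⟩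
    have hker : graphD K (Fin N) G (ξ - graphD K (Fin N) G c) = 0 := by
      rw [map_sub, hξ, DD_zero, sub_zero]
    have hX0 : ξ - graphD K (Fin N) G c ∈ X0 K G x := by
      have h : ξ - graphD K (Fin N) G c = a - Eop K G x c := by
        rw [hdecomp, graphD_eq K G x c]
        abel
      rw [h]
      exact Submodule.sub_mem _ ha (Eop_mem_X0 K G x hc)
    have hx0 : gen K G x * (ξ - graphD K (Fin N) G c) = 0 := by
      apply xpart_eq_zero K G x hX0
      rw [hker]
      exact Submodule.zero_mem _
    rw [Submodule.mem_inf]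
    exact ⟨mem_Yx_of_X0_ker K G x hX0 hx0, LinearMap.mem_ker.2 hker⟩
  · rintro h hmem ⟨f, hf⟩
    rw [Submodule.mem_inf] at hmem
    obtain ⟨a, c, ha, hc, hdecomp⟩ := exists_decomp K G x f
    refine ⟨f - graphD K (Fin N) G c, ?_, ?_⟩
    · have hX0 : f - graphD K (Fin N) G c ∈ X0 K G x := by
        have heq : f - graphD K (Fin N) G c = a - Eop K G x c := by
          rw [hdecomp, graphD_eq K G x c]
          abel
        rw [heq]
        exact Submodule.sub_mem _ ha (Eop_mem_X0 K G x hc)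
      have hDg : graphD K (Fin N) G (f - graphD K (Fin N) G c) = h := by
        rw [map_sub, hf, DD_zero, sub_zero]
      have hx0 : gen K G x * (f - graphD K (Fin N) G c) = 0 := by
        apply xpart_eq_zero K G x hX0
        rw [hDg]
        exact Yx_le_X0 K G x hmem.1
      exact mem_Yx_of_X0_ker K G x hX0 hx0
    · rw [map_sub, hf, DD_zero, sub_zero]
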